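/- arXiv:1702.06897 — 3 statements merged into one kernel-verified Lean document; each statement's English description precedes it below -/
import Mathlib

section
/- Under the hypotheses of equation (2.1) of the paper (positive integers a_1 ≥ a_i for all i, a_1 > b_j for all j, k + ℓ = n, k, ℓ ≥ 1, satisfying the rigidity identity for all x, y), one has k·a_1 = b_1 + ⋯ + b_ℓ, and consequently a_1 = a_2 = ⋯ = a_k, k is odd, and ℓ is even. -/
open Polynomial Finset

private lemma aux_one_sub {m : ℕ} (hm : 0 < m) :
    ((1 : ℂ[X]) - X ^ m).natDegree = m ∧ ((1 : ℂ[X]) - X ^ m).leadingCoeff = -1 := by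
  have h : (1 : ℂ[X]) - X ^ m = -(X ^ m - C 1) := by rw [map_one]; ring
  refine ⟨?_, ?_⟩
  · rw [h, natDegree_neg, natDegree_X_pow_sub_C]
  · rw [h, leadingCoeff_neg, (monic_X_pow_sub_C (1 : ℂ) hm.ne').leadingCoeff]

private lemma aux_pow_sub_pow {b c : ℕ} (hbc : b < c) :
    ((X : ℂ[X]) ^ b - X ^ c).natDegree = c ∧ ((X : ℂ[X]) ^ b - X ^ c).leadingCoeff = -1 := by
  have h : (X : ℂ[X]) ^ b - X ^ c = -(X ^ c - X ^ b) := by ring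
  have hd : ((X : ℂ[X]) ^ c - X ^ b).natDegree = c := by
    rw [natDegree_sub_eq_left_of_natDegree_lt (by simpa using hbc), natDegree_X_pow]
  have hq : ((X : ℂ[X]) ^ c - X ^ b).leadingCoeff = 1 := by
    rw [leadingCoeff, hd, coeff_sub]
    simp [coeff_X_pow, hbc.ne']
  exact ⟨by rw [h, natDegree_neg, hd], by rw [h, leadingCoeff_neg, hq]⟩

private lemma aux_pow_sub_one {m : ℕ} (hm : 0 < m) :
    ((X : ℂ[X]) ^ m - 1).natDegree = m ∧ ((X : ℂ[X]) ^ m - 1).leadingCoeff = 1 := by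
  have h : (X : ℂ[X]) ^ m - 1 = X ^ m - C 1 := by rw [map_one]
  rw [h]
  exact ⟨natDegree_X_pow_sub_C, (monic_X_pow_sub_C (1 : ℂ) hm.ne').leadingCoeff⟩

set_option maxHeartbeats 1000000 in
/-- From equation (2.3): with a := a₁ maximal among the aᵢ and strictly larger than
all bⱼ, the rigidity identity forces k·a = Σ bⱼ, all aᵢ equal to a, k odd, l even. -/
theorem stmt_15 (k l : ℕ) (hk : 0 < k) (hl : 0 < l)
    (a : Fin k → ℕ) (b : Fin l → ℕ) (ha : ∀ i, 0 < a i) (hb : ∀ j, 0 < b j)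
    (hamax : ∀ i, a i ≤ a ⟨0, hk⟩) (hab : ∀ j, b j < a ⟨0, hk⟩)
    (heq : ∀ x y z : ℂ, z ≠ 0 → (∀ i, z ^ (a i) ≠ 1) → (∀ j, z ^ (b j) ≠ 1) →
      (∏ i, (x * z ^ (a i) + y)) * (∏ j, (x + y * z ^ (b j)))
        - (∏ i, (x + y * z ^ (a i))) * (∏ j, (x * z ^ (b j) + y))
      = (x ^ k * y ^ l - x ^ l * y ^ k) * (∏ i, (z ^ (a i) - 1)) * (∏ j, (z ^ (b j) - 1))) :
    k * a ⟨0, hk⟩ = ∑ j, b j ∧ (∀ i, a i = a ⟨0, hk⟩) ∧ Odd k ∧ Even l := by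
  classical
  set i₀ : Fin k := ⟨0, hk⟩ with hi₀
  set A := a i₀ with hAdef
  have hA : 0 < A := ha i₀
  set S₁ := ∑ i, a i with hS₁
  set S₂ := ∑ j, b j with hS₂
  -- Step 0: for every c, a polynomial identity in ℂ[X]
  have key : ∀ c : ℕ,
      (∏ i, ((1 : ℂ[X]) - X ^ (c + a i))) * (∏ j, ((X : ℂ[X]) ^ (b j) - X ^ c))
        - (∏ i, ((X : ℂ[X]) ^ (a i) - X ^ c)) * (∏ j, ((1 : ℂ[X]) - X ^ (c + b j)))
      = (C ((-1 : ℂ) ^ k) * X ^ (c * k) - C ((-1 : ℂ) ^ l) * X ^ (c * l))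
          * (∏ i, ((X : ℂ[X]) ^ (a i) - 1)) * (∏ j, ((X : ℂ[X]) ^ (b j) - 1)) := by
    intro c
    rw [← sub_eq_zero]
    apply eq_zero_of_infinite_isRoot
    have h2 : ((fun t : ℝ => (t : ℂ)) '' Set.Ioi 1).Infinite :=
      Set.Infinite.image (fun x _ y _ h => by exact_mod_cast h) (Set.Ioi_infinite 1)
    refine h2.mono ?_
    rintro z ⟨t, ht, rfl⟩
    have h1t : (1 : ℝ) < t := ht
    have hz0 : (t : ℂ) ≠ 0 := Complex.ofReal_ne_zero.mpr (by linarith)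
    have hpow : ∀ m : ℕ, 0 < m → (t : ℂ) ^ m ≠ 1 := by
      intro m hm hcon
      have h1 : ((t ^ m : ℝ) : ℂ) = 1 := by push_cast; exact hcon
      have := Complex.ofReal_eq_one.mp h1
      have := one_lt_pow₀ h1t hm.ne'
      linarith
    have H := heq (-(t : ℂ) ^ c) 1 t hz0 (fun i => hpow _ (ha i)) (fun j => hpow _ (hb j))
    have e1 : (∏ i, (-(t : ℂ) ^ c * (t : ℂ) ^ (a i) + 1)) = ∏ i, ((1 : ℂ) - (t : ℂ) ^ (c + a i)) :=
      Finset.prod_congr rfl fun i _ => by rw [pow_add]; ring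
    have e2 : (∏ j, (-(t : ℂ) ^ c + 1 * (t : ℂ) ^ (b j))) = ∏ j, ((t : ℂ) ^ (b j) - (t : ℂ) ^ c) :=
      Finset.prod_congr rfl fun j _ => by ring
    have e3 : (∏ i, (-(t : ℂ) ^ c + 1 * (t : ℂ) ^ (a i))) = ∏ i, ((t : ℂ) ^ (a i) - (t : ℂ) ^ c) :=
      Finset.prod_congr rfl fun i _ => by ring
    have e4 : (∏ j, (-(t : ℂ) ^ c * (t : ℂ) ^ (b j) + 1)) = ∏ j, ((1 : ℂ) - (t : ℂ) ^ (c + b j)) :=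
      Finset.prod_congr rfl fun j _ => by rw [pow_add]; ring
    have e5 : (-(t : ℂ) ^ c) ^ k * 1 ^ l - (-(t : ℂ) ^ c) ^ l * 1 ^ k
        = ((-1 : ℂ) ^ k * (t : ℂ) ^ (c * k) - (-1 : ℂ) ^ l * (t : ℂ) ^ (c * l)) := by
      rw [pow_mul, pow_mul]; ring
    rw [e1, e2, e3, e4, e5] at H
    show IsRoot _ _
    simp only [IsRoot, eval_sub, eval_mul, eval_prod, eval_pow, eval_one, eval_C, eval_X]
    rw [sub_eq_zero]
    exact H
  -- basic degree facts about the four kinds of products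
  have hprod1 : ∀ c : ℕ,
      (∏ i, ((1 : ℂ[X]) - X ^ (c + a i))).natDegree = k * c + S₁ ∧
      (∏ i, ((1 : ℂ[X]) - X ^ (c + a i))).leadingCoeff = (-1) ^ k ∧
      (∏ i, ((1 : ℂ[X]) - X ^ (c + a i))) ≠ 0 := by
    intro c
    have pos : ∀ i : Fin k, 0 < c + a i := fun i => Nat.add_pos_right c (ha i)
    have ne : ∀ i ∈ (univ : Finset (Fin k)), ((1 : ℂ[X]) - X ^ (c + a i)) ≠ 0 := by
      intro i _
      rw [← leadingCoeff_ne_zero, (aux_one_sub (pos i)).2]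
      norm_num
    refine ⟨?_, ?_, Finset.prod_ne_zero_iff.mpr ne⟩
    · rw [natDegree_prod _ _ ne, Finset.sum_congr rfl fun i _ => (aux_one_sub (pos i)).1,
        Finset.sum_add_distrib, Finset.sum_const, Finset.card_univ, Fintype.card_fin,
        smul_eq_mul]
    · rw [leadingCoeff_prod, Finset.prod_congr rfl fun i _ => (aux_one_sub (pos i)).2,
        Finset.prod_const, Finset.card_univ, Fintype.card_fin]
  have hprod4 : ∀ c : ℕ,
      (∏ j, ((1 : ℂ[X]) - X ^ (c + b j))).natDegree = l * c + S₂ ∧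
      (∏ j, ((1 : ℂ[X]) - X ^ (c + b j))).leadingCoeff = (-1) ^ l ∧
      (∏ j, ((1 : ℂ[X]) - X ^ (c + b j))) ≠ 0 := by
    intro c
    have pos : ∀ j : Fin l, 0 < c + b j := fun j => Nat.add_pos_right c (hb j)
    have ne : ∀ j ∈ (univ : Finset (Fin l)), ((1 : ℂ[X]) - X ^ (c + b j)) ≠ 0 := by
      intro j _
      rw [← leadingCoeff_ne_zero, (aux_one_sub (pos j)).2]
      norm_num
    refine ⟨?_, ?_, Finset.prod_ne_zero_iff.mpr ne⟩
    · rw [natDegree_prod _ _ ne, Finset.sum_congr rfl fun j _ => (aux_one_sub (pos j)).1,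
        Finset.sum_add_distrib, Finset.sum_const, Finset.card_univ, Fintype.card_fin,
        smul_eq_mul]
    · rw [leadingCoeff_prod, Finset.prod_congr rfl fun j _ => (aux_one_sub (pos j)).2,
        Finset.prod_const, Finset.card_univ, Fintype.card_fin]
  have hprod2 : ∀ c : ℕ, (∀ j, b j < c) →
      (∏ j, ((X : ℂ[X]) ^ (b j) - X ^ c)).natDegree = l * c ∧
      (∏ j, ((X : ℂ[X]) ^ (b j) - X ^ c)).leadingCoeff = (-1) ^ l ∧
      (∏ j, ((X : ℂ[X]) ^ (b j) - X ^ c)) ≠ 0 := by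
    intro c hc
    have ne : ∀ j ∈ (univ : Finset (Fin l)), ((X : ℂ[X]) ^ (b j) - X ^ c) ≠ 0 := by
      intro j _
      rw [← leadingCoeff_ne_zero, (aux_pow_sub_pow (hc j)).2]
      norm_num
    refine ⟨?_, ?_, Finset.prod_ne_zero_iff.mpr ne⟩
    · rw [natDegree_prod _ _ ne, Finset.sum_congr rfl fun j _ => (aux_pow_sub_pow (hc j)).1,
        Finset.sum_const, Finset.card_univ, Fintype.card_fin, smul_eq_mul]
    · rw [leadingCoeff_prod, Finset.prod_congr rfl fun j _ => (aux_pow_sub_pow (hc j)).2,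
        Finset.prod_const, Finset.card_univ, Fintype.card_fin]
  have hprod3 : ∀ c : ℕ, (∀ i, a i < c) →
      (∏ i, ((X : ℂ[X]) ^ (a i) - X ^ c)).natDegree = k * c ∧
      (∏ i, ((X : ℂ[X]) ^ (a i) - X ^ c)).leadingCoeff = (-1) ^ k ∧
      (∏ i, ((X : ℂ[X]) ^ (a i) - X ^ c)) ≠ 0 := by
    intro c hc
    have ne : ∀ i ∈ (univ : Finset (Fin k)), ((X : ℂ[X]) ^ (a i) - X ^ c) ≠ 0 := by
      intro i _
      rw [← leadingCoeff_ne_zero, (aux_pow_sub_pow (hc i)).2]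
      norm_num
    refine ⟨?_, ?_, Finset.prod_ne_zero_iff.mpr ne⟩
    · rw [natDegree_prod _ _ ne, Finset.sum_congr rfl fun i _ => (aux_pow_sub_pow (hc i)).1,
        Finset.sum_const, Finset.card_univ, Fintype.card_fin, smul_eq_mul]
    · rw [leadingCoeff_prod, Finset.prod_congr rfl fun i _ => (aux_pow_sub_pow (hc i)).2,
        Finset.prod_const, Finset.card_univ, Fintype.card_fin]
  have hPa : (∏ i, ((X : ℂ[X]) ^ (a i) - 1)).natDegree = S₁ ∧
      (∏ i, ((X : ℂ[X]) ^ (a i) - 1)).leadingCoeff = 1 ∧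
      (∏ i, ((X : ℂ[X]) ^ (a i) - 1)) ≠ 0 := by
    have ne : ∀ i ∈ (univ : Finset (Fin k)), ((X : ℂ[X]) ^ (a i) - 1) ≠ 0 := by
      intro i _
      rw [← leadingCoeff_ne_zero, (aux_pow_sub_one (ha i)).2]
      norm_num
    refine ⟨?_, ?_, Finset.prod_ne_zero_iff.mpr ne⟩
    · rw [natDegree_prod _ _ ne, Finset.sum_congr rfl fun i _ => (aux_pow_sub_one (ha i)).1]
    · rw [leadingCoeff_prod, Finset.prod_congr rfl fun i _ => (aux_pow_sub_one (ha i)).2,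
        Finset.prod_const_one]
  have hPb : (∏ j, ((X : ℂ[X]) ^ (b j) - 1)).natDegree = S₂ ∧
      (∏ j, ((X : ℂ[X]) ^ (b j) - 1)).leadingCoeff = 1 ∧
      (∏ j, ((X : ℂ[X]) ^ (b j) - 1)) ≠ 0 := by
    have ne : ∀ j ∈ (univ : Finset (Fin l)), ((X : ℂ[X]) ^ (b j) - 1) ≠ 0 := by
      intro j _
      rw [← leadingCoeff_ne_zero, (aux_pow_sub_one (hb j)).2]
      norm_num
    refine ⟨?_, ?_, Finset.prod_ne_zero_iff.mpr ne⟩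
    · rw [natDegree_prod _ _ ne, Finset.sum_congr rfl fun j _ => (aux_pow_sub_one (hb j)).1]
    · rw [leadingCoeff_prod, Finset.prod_congr rfl fun j _ => (aux_pow_sub_one (hb j)).2,
        Finset.prod_const_one]

  obtain ⟨hPaD, hPaL, hPaN⟩ := hPa
  obtain ⟨hPbD, hPbL, hPbN⟩ := hPb
  -- W := Pa * Pb
  have hWN : (∏ i, ((X : ℂ[X]) ^ (a i) - 1)) * (∏ j, ((X : ℂ[X]) ^ (b j) - 1)) ≠ 0 :=
    mul_ne_zero hPaN hPbN
  have hWD : ((∏ i, ((X : ℂ[X]) ^ (a i) - 1)) * (∏ j, ((X : ℂ[X]) ^ (b j) - 1))).natDegree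
      = S₁ + S₂ := by rw [natDegree_mul hPaN hPbN, hPaD, hPbD]
  have hWL : ((∏ i, ((X : ℂ[X]) ^ (a i) - 1)) * (∏ j, ((X : ℂ[X]) ^ (b j) - 1))).leadingCoeff
      = 1 := by rw [leadingCoeff_mul, hPaL, hPbL, one_mul]
  -- facts about X^p * W
  have hXW : ∀ p : ℕ,
      ((X : ℂ[X]) ^ p * ((∏ i, ((X : ℂ[X]) ^ (a i) - 1)) * (∏ j, ((X : ℂ[X]) ^ (b j) - 1)))).natDegree
        = p + (S₁ + S₂) ∧
      ((X : ℂ[X]) ^ p * ((∏ i, ((X : ℂ[X]) ^ (a i) - 1)) * (∏ j, ((X : ℂ[X]) ^ (b j) - 1)))).leadingCoeff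
        = 1 := by
    intro p
    constructor
    · rw [natDegree_mul (pow_ne_zero _ X_ne_zero) hWN, natDegree_X_pow, hWD]
    · rw [leadingCoeff_mul, leadingCoeff_X_pow, one_mul, hWL]
  have hcoeffnd : ∀ p : ℂ[X], p.coeff p.natDegree = p.leadingCoeff := fun p => rfl
  -- coefficient extraction from RHS of key
  have hRHS : ∀ c m : ℕ,
      ((C ((-1 : ℂ) ^ k) * X ^ (c * k) - C ((-1 : ℂ) ^ l) * X ^ (c * l))
          * (∏ i, ((X : ℂ[X]) ^ (a i) - 1)) * (∏ j, ((X : ℂ[X]) ^ (b j) - 1))).coeff m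
      = (-1 : ℂ) ^ k * ((X : ℂ[X]) ^ (c * k)
            * ((∏ i, ((X : ℂ[X]) ^ (a i) - 1)) * (∏ j, ((X : ℂ[X]) ^ (b j) - 1)))).coeff m
        - (-1 : ℂ) ^ l * ((X : ℂ[X]) ^ (c * l)
            * ((∏ i, ((X : ℂ[X]) ^ (a i) - 1)) * (∏ j, ((X : ℂ[X]) ^ (b j) - 1)))).coeff m := by
    intro c m
    have h : (C ((-1 : ℂ) ^ k) * X ^ (c * k) - C ((-1 : ℂ) ^ l) * X ^ (c * l))
          * (∏ i, ((X : ℂ[X]) ^ (a i) - 1)) * (∏ j, ((X : ℂ[X]) ^ (b j) - 1))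
        = C ((-1 : ℂ) ^ k) * ((X : ℂ[X]) ^ (c * k)
            * ((∏ i, ((X : ℂ[X]) ^ (a i) - 1)) * (∏ j, ((X : ℂ[X]) ^ (b j) - 1))))
          - C ((-1 : ℂ) ^ l) * ((X : ℂ[X]) ^ (c * l)
            * ((∏ i, ((X : ℂ[X]) ^ (a i) - 1)) * (∏ j, ((X : ℂ[X]) ^ (b j) - 1)))) := by
      ring
    rw [h, coeff_sub, coeff_C_mul, coeff_C_mul]
  -- Step 1 : S₁ = S₂
  have hSS : S₁ = S₂ := by
    by_contra hne
    set c₁ := S₁ + S₂ + 1 with hc₁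
    have hS1c : S₁ < c₁ := by omega
    have hS2c : S₂ < c₁ := by omega
    have hbc : ∀ j, b j < c₁ := by
      intro j
      have : b j ≤ S₂ := Finset.single_le_sum (fun j _ => Nat.zero_le _) (mem_univ j)
      omega
    have hac : ∀ i, a i < c₁ := by
      intro i
      have : a i ≤ S₁ := Finset.single_le_sum (fun i _ => Nat.zero_le _) (mem_univ i)
      omega
    have h1 := hprod1 c₁
    have h2 := hprod2 c₁ hbc
    have h3 := hprod3 c₁ hac
    have h4 := hprod4 c₁
    have hK := key c₁
    have hT1N : (∏ i, ((1 : ℂ[X]) - X ^ (c₁ + a i))) * (∏ j, ((X : ℂ[X]) ^ (b j) - X ^ c₁)) ≠ 0 :=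
      mul_ne_zero h1.2.2 h2.2.2
    have hT2N : (∏ i, ((X : ℂ[X]) ^ (a i) - X ^ c₁)) * (∏ j, ((1 : ℂ[X]) - X ^ (c₁ + b j))) ≠ 0 :=
      mul_ne_zero h3.2.2 h4.2.2
    have hT1D : ((∏ i, ((1 : ℂ[X]) - X ^ (c₁ + a i))) * (∏ j, ((X : ℂ[X]) ^ (b j) - X ^ c₁))).natDegree
        = k * c₁ + S₁ + l * c₁ := by
      rw [natDegree_mul h1.2.2 h2.2.2, h1.1, h2.1]
    have hT2D : ((∏ i, ((X : ℂ[X]) ^ (a i) - X ^ c₁)) * (∏ j, ((1 : ℂ[X]) - X ^ (c₁ + b j)))).natDegree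
        = k * c₁ + (l * c₁ + S₂) := by
      rw [natDegree_mul h3.2.2 h4.2.2, h3.1, h4.1]
    have hT1L : ((∏ i, ((1 : ℂ[X]) - X ^ (c₁ + a i))) * (∏ j, ((X : ℂ[X]) ^ (b j) - X ^ c₁))).leadingCoeff
        = (-1) ^ k * (-1) ^ l := by rw [leadingCoeff_mul, h1.2.1, h2.2.1]
    have hT2L : ((∏ i, ((X : ℂ[X]) ^ (a i) - X ^ c₁)) * (∏ j, ((1 : ℂ[X]) - X ^ (c₁ + b j)))).leadingCoeff
        = (-1) ^ k * (-1) ^ l := by rw [leadingCoeff_mul, h3.2.1, h4.2.1]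
    have hck : c₁ ≤ k * c₁ := Nat.le_mul_of_pos_left c₁ hk
    have hcl : c₁ ≤ l * c₁ := Nat.le_mul_of_pos_left c₁ hl
    rcases Nat.lt_or_ge S₁ S₂ with hlt | hge
    on_goal 2 => have hlt : S₂ < S₁ := by omega
    · -- S₁ < S₂, use coefficient at D = k*c₁ + l*c₁ + S₂
      have hD2 : k * c₁ + (l * c₁ + S₂) = k * c₁ + l * c₁ + S₂ := by omega
      have hC := congrArg (fun p : ℂ[X] => p.coeff (k * c₁ + l * c₁ + S₂)) hK
      simp only [coeff_sub] at hC
      have c1 : ((∏ i, ((1 : ℂ[X]) - X ^ (c₁ + a i))) * (∏ j, ((X : ℂ[X]) ^ (b j) - X ^ c₁))).coeff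
          (k * c₁ + l * c₁ + S₂) = 0 := by
        apply coeff_eq_zero_of_natDegree_lt
        rw [hT1D]; omega
      have c2 : ((∏ i, ((X : ℂ[X]) ^ (a i) - X ^ c₁)) * (∏ j, ((1 : ℂ[X]) - X ^ (c₁ + b j)))).coeff
          (k * c₁ + l * c₁ + S₂) = (-1) ^ k * (-1) ^ l := by
        rw [← hD2, ← hT2D, hcoeffnd, hT2L]
      have c3 : ((X : ℂ[X]) ^ (c₁ * k)
            * ((∏ i, ((X : ℂ[X]) ^ (a i) - 1)) * (∏ j, ((X : ℂ[X]) ^ (b j) - 1)))).coeff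
          (k * c₁ + l * c₁ + S₂) = 0 := by
        apply coeff_eq_zero_of_natDegree_lt
        rw [(hXW (c₁ * k)).1, Nat.mul_comm c₁ k]
        have : S₁ + S₂ < l * c₁ + S₂ := by omega
        omega
      have c4 : ((X : ℂ[X]) ^ (c₁ * l)
            * ((∏ i, ((X : ℂ[X]) ^ (a i) - 1)) * (∏ j, ((X : ℂ[X]) ^ (b j) - 1)))).coeff
          (k * c₁ + l * c₁ + S₂) = 0 := by
        apply coeff_eq_zero_of_natDegree_lt
        rw [(hXW (c₁ * l)).1, Nat.mul_comm c₁ l]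
        have : S₁ + S₂ < k * c₁ + S₂ := by omega
        omega
      rw [hRHS, c1, c2, c3, c4] at hC
      have : ((-1 : ℂ)) ^ (k + l) = 0 := by rw [pow_add]; linear_combination -hC
      exact absurd this (pow_ne_zero _ (by norm_num))
    · -- S₂ < S₁, use coefficient at D = k*c₁ + S₁ + l*c₁
      have hC := congrArg (fun p : ℂ[X] => p.coeff (k * c₁ + S₁ + l * c₁)) hK
      simp only [coeff_sub] at hC
      have c1 : ((∏ i, ((1 : ℂ[X]) - X ^ (c₁ + a i))) * (∏ j, ((X : ℂ[X]) ^ (b j) - X ^ c₁))).coeff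
          (k * c₁ + S₁ + l * c₁) = (-1) ^ k * (-1) ^ l := by
        rw [← hT1D, hcoeffnd, hT1L]
      have c2 : ((∏ i, ((X : ℂ[X]) ^ (a i) - X ^ c₁)) * (∏ j, ((1 : ℂ[X]) - X ^ (c₁ + b j)))).coeff
          (k * c₁ + S₁ + l * c₁) = 0 := by
        apply coeff_eq_zero_of_natDegree_lt
        rw [hT2D]; omega
      have c3 : ((X : ℂ[X]) ^ (c₁ * k)
            * ((∏ i, ((X : ℂ[X]) ^ (a i) - 1)) * (∏ j, ((X : ℂ[X]) ^ (b j) - 1)))).coeff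
          (k * c₁ + S₁ + l * c₁) = 0 := by
        apply coeff_eq_zero_of_natDegree_lt
        rw [(hXW (c₁ * k)).1, Nat.mul_comm c₁ k]
        omega
      have c4 : ((X : ℂ[X]) ^ (c₁ * l)
            * ((∏ i, ((X : ℂ[X]) ^ (a i) - 1)) * (∏ j, ((X : ℂ[X]) ^ (b j) - 1)))).coeff
          (k * c₁ + S₁ + l * c₁) = 0 := by
        apply coeff_eq_zero_of_natDegree_lt
        rw [(hXW (c₁ * l)).1, Nat.mul_comm c₁ l]
        omega
      rw [hRHS, c1, c2, c3, c4] at hC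
      have : ((-1 : ℂ)) ^ (k + l) = 0 := by rw [pow_add]; linear_combination hC
      exact absurd this (pow_ne_zero _ (by norm_num))

  -- Step 2 : substitute c = A
  have hKA := key A
  have hzero : (∏ i, ((X : ℂ[X]) ^ (a i) - X ^ A)) = 0 :=
    Finset.prod_eq_zero (mem_univ i₀) (by rw [hAdef]; exact sub_self _)
  rw [hzero, zero_mul, sub_zero, Nat.mul_comm A k, Nat.mul_comm A l] at hKA
  have hRHSA : ∀ m : ℕ,
      ((C ((-1 : ℂ) ^ k) * X ^ (k * A) - C ((-1 : ℂ) ^ l) * X ^ (l * A))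
          * (∏ i, ((X : ℂ[X]) ^ (a i) - 1)) * (∏ j, ((X : ℂ[X]) ^ (b j) - 1))).coeff m
      = (-1 : ℂ) ^ k * ((X : ℂ[X]) ^ (k * A)
            * ((∏ i, ((X : ℂ[X]) ^ (a i) - 1)) * (∏ j, ((X : ℂ[X]) ^ (b j) - 1)))).coeff m
        - (-1 : ℂ) ^ l * ((X : ℂ[X]) ^ (l * A)
            * ((∏ i, ((X : ℂ[X]) ^ (a i) - 1)) * (∏ j, ((X : ℂ[X]) ^ (b j) - 1)))).coeff m := by
    intro m
    have h := hRHS A m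
    rwa [Nat.mul_comm A k, Nat.mul_comm A l] at h
  have h1 := hprod1 A
  have h2 := hprod2 A hab
  have hT1N : (∏ i, ((1 : ℂ[X]) - X ^ (A + a i))) * (∏ j, ((X : ℂ[X]) ^ (b j) - X ^ A)) ≠ 0 :=
    mul_ne_zero h1.2.2 h2.2.2
  have hT1D : ((∏ i, ((1 : ℂ[X]) - X ^ (A + a i))) * (∏ j, ((X : ℂ[X]) ^ (b j) - X ^ A))).natDegree
      = k * A + S₁ + l * A := by
    rw [natDegree_mul h1.2.2 h2.2.2, h1.1, h2.1]
  have hT1L : ((∏ i, ((1 : ℂ[X]) - X ^ (A + a i))) * (∏ j, ((X : ℂ[X]) ^ (b j) - X ^ A))).leadingCoeff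
      = (-1) ^ k * (-1) ^ l := by rw [leadingCoeff_mul, h1.2.1, h2.2.1]
  have hS2lA : S₂ < l * A := by
    rw [hS₂]
    calc ∑ j, b j < ∑ _j : Fin l, A :=
          Finset.sum_lt_sum_of_nonempty ⟨⟨0, hl⟩, mem_univ _⟩ (fun j _ => hab j)
    _ = l * A := by rw [Finset.sum_const, Finset.card_univ, Fintype.card_fin, smul_eq_mul]
  have hklne : k ≠ l := by
    intro h
    have hee : C ((-1 : ℂ) ^ k) * (X : ℂ[X]) ^ (k * A) = C ((-1 : ℂ) ^ l) * X ^ (l * A) := by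
      rw [h]
    rw [hee, sub_self, zero_mul, zero_mul] at hKA
    exact hT1N hKA
  have hnotgt : ¬ l < k := by
    intro hlk
    have hAkl : l * A < k * A := mul_lt_mul_of_pos_right hlk hA
    rcases lt_trichotomy (k * A + S₁ + l * A) (k * A + (S₁ + S₂)) with h | h | h
    · have hC := congrArg (fun p : ℂ[X] => p.coeff (k * A + (S₁ + S₂))) hKA
      rw [hRHSA] at hC
      have c1 : ((∏ i, ((1 : ℂ[X]) - X ^ (A + a i))) * (∏ j, ((X : ℂ[X]) ^ (b j) - X ^ A))).coeff
          (k * A + (S₁ + S₂)) = 0 := by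
        apply coeff_eq_zero_of_natDegree_lt
        rw [hT1D]; exact h
      have c2 : ((X : ℂ[X]) ^ (k * A)
            * ((∏ i, ((X : ℂ[X]) ^ (a i) - 1)) * (∏ j, ((X : ℂ[X]) ^ (b j) - 1)))).coeff
          (k * A + (S₁ + S₂)) = 1 := by
        rw [← (hXW (k * A)).1, hcoeffnd, (hXW (k * A)).2]
      have c3 : ((X : ℂ[X]) ^ (l * A)
            * ((∏ i, ((X : ℂ[X]) ^ (a i) - 1)) * (∏ j, ((X : ℂ[X]) ^ (b j) - 1)))).coeff
          (k * A + (S₁ + S₂)) = 0 := by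
        apply coeff_eq_zero_of_natDegree_lt
        rw [(hXW (l * A)).1]
        linarith
      rw [c1, c2, c3] at hC
      have : ((-1 : ℂ)) ^ k = 0 := by linear_combination -hC
      exact absurd this (pow_ne_zero _ (by norm_num))
    · have : l * A = S₂ := by linarith
      linarith
    · have hC := hRHSA (k * A + S₁ + l * A)
      rw [← hKA] at hC
      have c1 : ((∏ i, ((1 : ℂ[X]) - X ^ (A + a i))) * (∏ j, ((X : ℂ[X]) ^ (b j) - X ^ A))).coeff
          (k * A + S₁ + l * A) = (-1) ^ k * (-1) ^ l := by
        rw [← hT1D, hcoeffnd, hT1L]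
      have c2 : ((X : ℂ[X]) ^ (k * A)
            * ((∏ i, ((X : ℂ[X]) ^ (a i) - 1)) * (∏ j, ((X : ℂ[X]) ^ (b j) - 1)))).coeff
          (k * A + S₁ + l * A) = 0 := by
        apply coeff_eq_zero_of_natDegree_lt
        rw [(hXW (k * A)).1]
        linarith
      have c3 : ((X : ℂ[X]) ^ (l * A)
            * ((∏ i, ((X : ℂ[X]) ^ (a i) - 1)) * (∏ j, ((X : ℂ[X]) ^ (b j) - 1)))).coeff
          (k * A + S₁ + l * A) = 0 := by
        apply coeff_eq_zero_of_natDegree_lt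
        rw [(hXW (l * A)).1]
        linarith
      rw [c1, c2, c3] at hC
      have : ((-1 : ℂ)) ^ (k + l) = 0 := by rw [pow_add]; linear_combination hC
      exact absurd this (pow_ne_zero _ (by norm_num))
  have hkl : k < l := by omega
  have hAkl2 : k * A < l * A := mul_lt_mul_of_pos_right hkl hA
  have hkAS : k * A = S₂ ∧ Odd k := by
    rcases lt_trichotomy (k * A + S₁ + l * A) (l * A + (S₁ + S₂)) with h | h | h
    · exfalso
      have hC := congrArg (fun p : ℂ[X] => p.coeff (l * A + (S₁ + S₂))) hKA
      rw [hRHSA] at hC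
      have c1 : ((∏ i, ((1 : ℂ[X]) - X ^ (A + a i))) * (∏ j, ((X : ℂ[X]) ^ (b j) - X ^ A))).coeff
          (l * A + (S₁ + S₂)) = 0 := by
        apply coeff_eq_zero_of_natDegree_lt
        rw [hT1D]; exact h
      have c2 : ((X : ℂ[X]) ^ (k * A)
            * ((∏ i, ((X : ℂ[X]) ^ (a i) - 1)) * (∏ j, ((X : ℂ[X]) ^ (b j) - 1)))).coeff
          (l * A + (S₁ + S₂)) = 0 := by
        apply coeff_eq_zero_of_natDegree_lt
        rw [(hXW (k * A)).1]
        linarith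
      have c3 : ((X : ℂ[X]) ^ (l * A)
            * ((∏ i, ((X : ℂ[X]) ^ (a i) - 1)) * (∏ j, ((X : ℂ[X]) ^ (b j) - 1)))).coeff
          (l * A + (S₁ + S₂)) = 1 := by
        rw [← (hXW (l * A)).1, hcoeffnd, (hXW (l * A)).2]
      rw [c1, c2, c3] at hC
      have : ((-1 : ℂ)) ^ l = 0 := by linear_combination hC
      exact absurd this (pow_ne_zero _ (by norm_num))
    · constructor
      · linarith
      · have hC := hRHSA (k * A + S₁ + l * A)
        rw [← hKA] at hC
        have c1 : ((∏ i, ((1 : ℂ[X]) - X ^ (A + a i))) * (∏ j, ((X : ℂ[X]) ^ (b j) - X ^ A))).coeff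
            (k * A + S₁ + l * A) = (-1) ^ k * (-1) ^ l := by
          rw [← hT1D, hcoeffnd, hT1L]
        have c2 : ((X : ℂ[X]) ^ (k * A)
              * ((∏ i, ((X : ℂ[X]) ^ (a i) - 1)) * (∏ j, ((X : ℂ[X]) ^ (b j) - 1)))).coeff
            (k * A + S₁ + l * A) = 0 := by
          apply coeff_eq_zero_of_natDegree_lt
          rw [(hXW (k * A)).1]
          linarith
        have c3 : ((X : ℂ[X]) ^ (l * A)
              * ((∏ i, ((X : ℂ[X]) ^ (a i) - 1)) * (∏ j, ((X : ℂ[X]) ^ (b j) - 1)))).coeff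
            (k * A + S₁ + l * A) = 1 := by
          rw [show k * A + S₁ + l * A = l * A + (S₁ + S₂) from h, ← (hXW (l * A)).1, hcoeffnd,
            (hXW (l * A)).2]
        rw [c1, c2, c3] at hC
        have hfac : (((-1 : ℂ)) ^ k + 1) * (-1) ^ l = 0 := by linear_combination hC
        have hm1 : ((-1 : ℂ)) ^ k = -1 := by
          rcases mul_eq_zero.mp hfac with h' | h'
          · linear_combination h'
          · exact absurd h' (pow_ne_zero _ (by norm_num))
        rcases Nat.even_or_odd k with he | ho
        · exfalso
          rw [he.neg_one_pow] at hm1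
          norm_num at hm1
        · exact ho
    · exfalso
      have hC := hRHSA (k * A + S₁ + l * A)
      rw [← hKA] at hC
      have c1 : ((∏ i, ((1 : ℂ[X]) - X ^ (A + a i))) * (∏ j, ((X : ℂ[X]) ^ (b j) - X ^ A))).coeff
          (k * A + S₁ + l * A) = (-1) ^ k * (-1) ^ l := by
        rw [← hT1D, hcoeffnd, hT1L]
      have c2 : ((X : ℂ[X]) ^ (k * A)
            * ((∏ i, ((X : ℂ[X]) ^ (a i) - 1)) * (∏ j, ((X : ℂ[X]) ^ (b j) - 1)))).coeff
          (k * A + S₁ + l * A) = 0 := by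
        apply coeff_eq_zero_of_natDegree_lt
        rw [(hXW (k * A)).1]
        linarith
      have c3 : ((X : ℂ[X]) ^ (l * A)
            * ((∏ i, ((X : ℂ[X]) ^ (a i) - 1)) * (∏ j, ((X : ℂ[X]) ^ (b j) - 1)))).coeff
          (k * A + S₁ + l * A) = 0 := by
        apply coeff_eq_zero_of_natDegree_lt
        rw [(hXW (l * A)).1]
        linarith
      rw [c1, c2, c3] at hC
      have : ((-1 : ℂ)) ^ (k + l) = 0 := by rw [pow_add]; linear_combination hC
      exact absurd this (pow_ne_zero _ (by norm_num))
  obtain ⟨hkA, hOdd⟩ := hkAS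
  have hall : ∀ i, a i = A := by
    intro i
    by_contra hne'
    have hlta : S₁ < k * A := by
      rw [hS₁]
      calc ∑ i', a i' < ∑ _i : Fin k, A :=
            Finset.sum_lt_sum (fun i' _ => hamax i')
              ⟨i, mem_univ i, lt_of_le_of_ne (hamax i) hne'⟩
      _ = k * A := by rw [Finset.sum_const, Finset.card_univ, Fintype.card_fin, smul_eq_mul]
    linarith [hSS, hkA]
  -- Even l
  have hsplit2 : (∏ j, ((X : ℂ[X]) ^ (b j) - X ^ A))
      = X ^ S₂ * ∏ j, ((1 : ℂ[X]) - X ^ (A - b j)) := by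
    rw [hS₂, ← Finset.prod_pow_eq_pow_sum, ← Finset.prod_mul_distrib]
    refine Finset.prod_congr rfl fun j _ => ?_
    have hj := hab j
    rw [mul_sub, mul_one, ← pow_add, show b j + (A - b j) = A by omega]
  have hsplit3 : C ((-1 : ℂ) ^ k) * (X : ℂ[X]) ^ (k * A) - C ((-1 : ℂ) ^ l) * X ^ (l * A)
      = X ^ (k * A) * (C ((-1 : ℂ) ^ k) - C ((-1 : ℂ) ^ l) * X ^ ((l - k) * A)) := by
    have h9 : l * A = k * A + (l - k) * A := by
      rw [← Nat.add_mul]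
      congr 1
      omega
    rw [h9, pow_add]
    ring
  rw [hsplit2, hsplit3, ← hkA] at hKA
  have hmain : (∏ i, ((1 : ℂ[X]) - X ^ (A + a i))) * (∏ j, ((1 : ℂ[X]) - X ^ (A - b j)))
      = (C ((-1 : ℂ) ^ k) - C ((-1 : ℂ) ^ l) * X ^ ((l - k) * A))
          * ((∏ i, ((X : ℂ[X]) ^ (a i) - 1)) * (∏ j, ((X : ℂ[X]) ^ (b j) - 1))) := by
    apply mul_left_cancel₀ (pow_ne_zero (k * A) (X_ne_zero : (X : ℂ[X]) ≠ 0))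
    linear_combination hKA
  have hev := congrArg (eval 0) hmain
  simp only [eval_mul, eval_sub, eval_prod, eval_pow, eval_one, eval_C, eval_X] at hev
  have E1 : (∏ i, ((1 : ℂ) - 0 ^ (A + a i))) = 1 :=
    Finset.prod_eq_one fun i _ => by
      rw [zero_pow (show A + a i ≠ 0 by have := ha i; omega), sub_zero]
  have E2 : (∏ j, ((1 : ℂ) - 0 ^ (A - b j))) = 1 :=
    Finset.prod_eq_one fun j _ => by
      rw [zero_pow (show A - b j ≠ 0 by have := hab j; omega), sub_zero]
  have E3 : (∏ i, ((0 : ℂ) ^ (a i) - 1)) = (-1) ^ k := by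
    calc (∏ i, ((0 : ℂ) ^ (a i) - 1)) = ∏ _i : Fin k, (-1 : ℂ) :=
          Finset.prod_congr rfl fun i _ => by rw [zero_pow (ha i).ne', zero_sub]
    _ = (-1) ^ k := by rw [Finset.prod_const, Finset.card_univ, Fintype.card_fin]
  have E4 : (∏ j, ((0 : ℂ) ^ (b j) - 1)) = (-1) ^ l := by
    calc (∏ j, ((0 : ℂ) ^ (b j) - 1)) = ∏ _j : Fin l, (-1 : ℂ) :=
          Finset.prod_congr rfl fun j _ => by rw [zero_pow (hb j).ne', zero_sub]
    _ = (-1) ^ l := by rw [Finset.prod_const, Finset.card_univ, Fintype.card_fin]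
  have E5 : (0 : ℂ) ^ ((l - k) * A) = 0 :=
    zero_pow (Nat.mul_ne_zero (by omega) (by omega))
  rw [E1, E2, E3, E4, E5] at hev
  have hevenl : Even l := by
    rcases Nat.even_or_odd l with he | ho
    · exact he
    · exfalso
      have hk2 : ((-1 : ℂ)) ^ k * (-1) ^ k = 1 := by rw [← mul_pow]; norm_num
      rw [ho.neg_one_pow] at hev
      have hcon : (1 : ℂ) = -1 := by linear_combination hev - hk2
      norm_num at hcon
  exact ⟨hkA, hall, hOdd, hevenl⟩
end

section
/- Let a, b_1, b_2 be positive integers with a = b_1 + b_2. Then identically in z: (z^a + 1)(z^{a−b_1} − 1)(z^{a−b_2} − 1) / ((z^{b_1} − 1)(z^{b_2} − 1)) = (z^a + 1), and more to the point, the identity (z^a + 1)^k (z^{a−b_1} − 1)⋯(z^{a−b_ℓ} − 1) / ((z^{b_1} − 1)⋯(z^{b_ℓ} − 1)) = z^{a(ℓ−k)} + 1 with k odd, ℓ even, a > b_j for all j, and ka = b_1 + ⋯ + b_ℓ, forces k = 1, ℓ = 2, and a = b_1 + b_2. -/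
open Polynomial

-- constant coefficient of ∏ (X^{e i} - 1)
lemma coeff0_prod {ι : Type*} (s : Finset ι) (e : ι → ℕ) (he : ∀ i ∈ s, 0 < e i) :
    (∏ i ∈ s, ((X : ℂ[X]) ^ (e i) - 1)).coeff 0 = (-1) ^ s.card := by
  rw [Polynomial.coeff_zero_eq_eval_zero, Polynomial.eval_prod]
  rw [Finset.prod_congr rfl (fun i hi => by
    simp [zero_pow (he i hi).ne'] : ∀ i ∈ s, Polynomial.eval 0 ((X:ℂ[X])^(e i) - 1) = -1)]
  simp

lemma coeffZ {ι : Type*} (s : Finset ι) (e : ι → ℕ) (n : ℕ) (hn : 0 < n)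
    (h : ∀ i ∈ s, n < e i) :
    (∏ i ∈ s, ((X : ℂ[X]) ^ (e i) - 1)).coeff n = 0 := by
  classical
  induction s using Finset.induction_on with
  | empty => simp [Polynomial.coeff_one, hn.ne']
  | @insert i s hi ih =>
    
    rw [Finset.prod_insert hi, sub_mul, one_mul, Polynomial.coeff_sub,
      mul_comm ((X:ℂ[X])^(e i)), Polynomial.coeff_mul_X_pow',
      if_neg (not_le.2 (h i (Finset.mem_insert_self i s))),
      ih (fun j hj => h j (Finset.mem_insert_of_mem hj))]
    ring

lemma coeffC {ι : Type*} (s : Finset ι) (e : ι → ℕ) (n : ℕ) (hn : 0 < n)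
    (h : ∀ i ∈ s, n ≤ e i) :
    (∏ i ∈ s, ((X : ℂ[X]) ^ (e i) - 1)).coeff n
      = (-1) ^ (s.card - 1) * ((s.filter fun i => e i = n).card : ℂ) := by
  classical
  induction s using Finset.induction_on with
  | empty => simp [Polynomial.coeff_one, hn.ne']
  | @insert i s hi ih =>
    
    have hmem : i ∈ insert i s := Finset.mem_insert_self i s
    have hcard : (insert i s).card = s.card + 1 := Finset.card_insert_of_notMem hi
    rw [Finset.prod_insert hi, sub_mul, one_mul, Polynomial.coeff_sub,
      mul_comm ((X:ℂ[X])^(e i)), Polynomial.coeff_mul_X_pow',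
      ih (fun j hj => h j (Finset.mem_insert_of_mem hj))]
    rcases eq_or_lt_of_le (h i hmem) with heq | hlt
    · rw [if_pos heq.ge]
      have h0 : (∏ j ∈ s, ((X : ℂ[X]) ^ (e j) - 1)).coeff (n - e i) = (-1) ^ s.card := by
        rw [← heq, Nat.sub_self]
        exact coeff0_prod s e (fun j hj => lt_of_lt_of_le hn (h j (Finset.mem_insert_of_mem hj)))
      rw [h0, Finset.filter_insert, if_pos heq.symm, hcard,
        Finset.card_insert_of_notMem (by simp [hi])]
      rcases Nat.eq_zero_or_pos s.card with h0' | h0'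
      · have : s = ∅ := Finset.card_eq_zero.mp h0'
        subst this
        simp
      · obtain ⟨c', hc'⟩ : ∃ c', s.card = c' + 1 := ⟨s.card - 1, by omega⟩
        rw [hc', Nat.add_sub_cancel]
        push_cast
        ring
    · rw [if_neg (not_le.2 hlt), Finset.filter_insert, if_neg (by omega : ¬ e i = n), hcard,
        Nat.add_sub_cancel]
      rcases Nat.eq_zero_or_pos s.card with h0' | h0'
      · have : s = ∅ := Finset.card_eq_zero.mp h0'
        subst this
        simp
      · obtain ⟨c', hc'⟩ : ∃ c', s.card = c' + 1 := ⟨s.card - 1, by omega⟩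
        rw [hc', Nat.add_sub_cancel]
        ring

/-- Equation (2.5): the special identity for a = b₁ + b₂, and the general fact
that (z^a+1)^k ∏(z^{a-bⱼ}-1)/∏(z^{bⱼ}-1) = z^{a(l-k)}+1 with k odd, l even,
a > bⱼ, k·a = Σ bⱼ forces k = 1, l = 2 and a = b₁ + b₂. -/
theorem stmt_16 :
    (∀ a b₁ b₂ : ℕ, 0 < b₁ → 0 < b₂ → a = b₁ + b₂ →
      ∀ z : ℂ, z ≠ 0 → z ^ b₁ ≠ 1 → z ^ b₂ ≠ 1 →
        (z ^ a + 1) * (z ^ (a - b₁) - 1) * (z ^ (a - b₂) - 1)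
            / ((z ^ b₁ - 1) * (z ^ b₂ - 1)) = z ^ a + 1) ∧
    (∀ (k l : ℕ), Odd k → Even l → 0 < l →
      ∀ (a : ℕ) (b : Fin l → ℕ), (∀ j, 0 < b j) → (∀ j, b j < a) →
        k * a = ∑ j, b j →
        (∀ z : ℂ, z ≠ 0 → (∀ j, z ^ (b j) ≠ 1) →
          (z ^ a + 1) ^ k * (∏ j, (z ^ (a - b j) - 1)) / (∏ j, (z ^ (b j) - 1))
            = z ^ ((a : ℤ) * ((l : ℤ) - (k : ℤ))) + 1) →
        k = 1 ∧ l = 2 ∧ a = ∑ j, b j) := by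
  constructor
  · intro a b₁ b₂ hb₁ hb₂ ha z hz h1 h2
    have e1 : a - b₁ = b₂ := by omega
    have e2 : a - b₂ = b₁ := by omega
    rw [e1, e2]
    have d1 : z ^ b₁ - 1 ≠ 0 := sub_ne_zero.mpr h1
    have d2 : z ^ b₂ - 1 ≠ 0 := sub_ne_zero.mpr h2
    field_simp
  · intro k l hk hl hlpos a b hbpos hba hsum hid
    have hkpos : 0 < k := hk.pos
    have j1 : Fin l := ⟨0, hlpos⟩
    have hapos : 0 < a := lt_trans (hbpos j1) (hba j1)
    have hkl : k < l := by
      have h1 : (∑ j, b j) < ∑ _j : Fin l, a :=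
        Finset.sum_lt_sum_of_nonempty ⟨j1, Finset.mem_univ j1⟩ (fun j _ => hba j)
      rw [Finset.sum_const, Finset.card_univ, Fintype.card_fin, smul_eq_mul] at h1
      rw [← hsum] at h1
      exact lt_of_mul_lt_mul_right h1 (Nat.zero_le a)
    set A := a * (l - k) with hA
    have hApos : 0 < A := Nat.mul_pos hapos (by omega)
    have haA : a ≤ A := Nat.le_mul_of_pos_right a (by omega)
    -- polynomials
    set V1 : ℂ[X] := ∏ j, ((X : ℂ[X]) ^ (a - b j) - 1) with hV1
    set V : ℂ[X] := ∏ j, ((X : ℂ[X]) ^ (b j) - 1) with hV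
    set P : ℂ[X] := ((X : ℂ[X]) ^ a + 1) ^ k * V1 with hP
    set Q : ℂ[X] := ((X : ℂ[X]) ^ A + 1) * V with hQ
    have hevalP : ∀ z : ℂ, eval z P = (z ^ a + 1) ^ k * ∏ j, (z ^ (a - b j) - 1) := by
      intro z; simp [hP, hV1, eval_prod]
    have hevalQ : ∀ z : ℂ, eval z Q = (z ^ A + 1) * ∏ j, (z ^ (b j) - 1) := by
      intro z; simp [hQ, hV, eval_prod]
    have hPQ : P = Q := by
      apply Polynomial.eq_of_infinite_eval_eq
      have hbadfin : (({0} : Set ℂ) ∪ ⋃ j, {z : ℂ | z ^ (b j) = 1}).Finite := by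
        apply Set.Finite.union (Set.finite_singleton 0)
        apply Set.finite_iUnion
        intro j
        have hne : ((X : ℂ[X]) ^ (b j) - C 1) ≠ 0 :=
          Polynomial.X_pow_sub_C_ne_zero (hbpos j) 1
        have := Polynomial.finite_setOf_isRoot hne
        apply Set.Finite.subset this
        intro z hz
        simp only [Set.mem_setOf_eq] at hz ⊢
        simp [Polynomial.IsRoot, hz]
      apply Set.Infinite.mono _ hbadfin.infinite_compl
      intro z hz
      simp only [Set.mem_compl_iff, Set.mem_union, Set.mem_singleton_iff, Set.mem_iUnion,
        Set.mem_setOf_eq, not_or, not_exists] at hz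
      obtain ⟨hz0, hzb⟩ := hz
      have hDne : (∏ j, ((z : ℂ) ^ (b j) - 1)) ≠ 0 :=
        Finset.prod_ne_zero_iff.mpr (fun j _ => sub_ne_zero.mpr (hzb j))
      have hid' := hid z hz0 hzb
      have hcast : ((a : ℤ) * ((l : ℤ) - (k : ℤ))) = ((A : ℕ) : ℤ) := by
        rw [hA]; push_cast [Nat.cast_sub hkl.le]; ring
      rw [hcast, zpow_natCast] at hid'
      rw [div_eq_iff hDne] at hid'
      simp only [Set.mem_setOf_eq]
      rw [hevalP, hevalQ, hid']
    -- the root ζ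
    have haC : (a : ℂ) ≠ 0 := Nat.cast_ne_zero.mpr hapos.ne'
    set ζ : ℂ := Complex.exp (Real.pi * Complex.I / a) with hζ
    have hζ0 : ζ ≠ 0 := Complex.exp_ne_zero _
    have hζa : ζ ^ a = -1 := by
      rw [hζ, ← Complex.exp_nat_mul]
      rw [show (a : ℂ) * (Real.pi * Complex.I / a) = Real.pi * Complex.I by
        field_simp]
      exact Complex.exp_pi_mul_I
    have hζpow : ∀ n : ℕ, 0 < n → n < 2 * a → ζ ^ n ≠ 1 := by
      intro n hn hn2 hcon
      rw [hζ, ← Complex.exp_nat_mul, Complex.exp_eq_one_iff] at hcon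
      obtain ⟨m, hm⟩ := hcon
      have hπ : (Real.pi : ℂ) ≠ 0 := Complex.ofReal_ne_zero.mpr Real.pi_ne_zero
      have hI : Complex.I ≠ 0 := Complex.I_ne_zero
      have hC : (n : ℂ) = 2 * (m : ℂ) * (a : ℂ) := by
        field_simp at hm
        apply mul_right_cancel₀ hI
        apply mul_right_cancel₀ hπ
        linear_combination (Complex.I * ↑Real.pi) * hm
      have hZ : (n : ℤ) = 2 * m * (a : ℤ) := by exact_mod_cast hC
      have hn' : (0 : ℤ) < n := by exact_mod_cast hn
      have hn2' : (n : ℤ) < 2 * a := by exact_mod_cast hn2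
      have ha' : (0 : ℤ) < a := by exact_mod_cast hapos
      rcases lt_trichotomy m 0 with h | h | h
      · nlinarith
      · subst h
        simp at hZ
        omega
      · nlinarith
    have hζb : ∀ j, ζ ^ (b j) ≠ 1 := fun j => hζpow _ (hbpos j) (by have := hba j; omega)
    have hlk : Odd (l - k) := Nat.Even.sub_odd hkl.le hl hk
    have hζA : ζ ^ A = -1 := by
      rw [hA, pow_mul, hζa, hlk.neg_one_pow]
    have hVζ : eval ζ V ≠ 0 := by
      rw [hV]
      simp only [eval_prod, eval_sub, eval_pow, eval_X, eval_one]
      exact Finset.prod_ne_zero_iff.mpr (fun j _ => sub_ne_zero.mpr (hζb j))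
    -- k = 1
    have hk1 : k = 1 := by
      by_contra hne
      have h2k : 2 ≤ k := by obtain ⟨t, ht⟩ := hk; omega
      obtain ⟨c, hc⟩ : ∃ c, k = 2 + c := ⟨k - 2, by omega⟩
      have hPfac : P = ((X : ℂ[X]) ^ a + 1) *
          (((X : ℂ[X]) ^ a + 1) * (((X : ℂ[X]) ^ a + 1) ^ c * V1)) := by
        rw [hP, hc, pow_add]
        ring
      have hPd : eval ζ (derivative P) = 0 := by
        rw [hPfac]
        simp [derivative_mul, hζa]
      have hQd : eval ζ (derivative Q) = (A : ℂ) * ζ ^ (A - 1) * eval ζ V := by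
        rw [hQ, derivative_mul]
        simp [derivative_X_pow, hζA]
      have hQne : eval ζ (derivative Q) ≠ 0 := by
        rw [hQd]
        refine mul_ne_zero (mul_ne_zero ?_ (pow_ne_zero _ hζ0)) hVζ
        exact Nat.cast_ne_zero.mpr hApos.ne'
      rw [hPQ] at hPd
      exact hQne hPd
    have hsum' : a = ∑ j, b j := by rw [← hsum, hk1, one_mul]
    refine ⟨hk1, ?_, hsum'⟩
    -- l = 2
    obtain ⟨j₀, -, hj₀⟩ := Finset.exists_max_image Finset.univ b ⟨j1, Finset.mem_univ j1⟩
    obtain ⟨i₀, -, hi₀⟩ := Finset.exists_min_image Finset.univ b ⟨j1, Finset.mem_univ j1⟩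
    have hmpos : 0 < b i₀ := hbpos i₀
    have hmlt : b i₀ < a := hba i₀
    have key : a ≤ b i₀ + b j₀ := by
      by_contra hcon
      push_neg at hcon
      -- coeff (b i₀) of both sides
      have hc1 : P.coeff (b i₀) = V1.coeff (b i₀) := by
        have hdvd := sub_dvd_pow_sub_pow ((X : ℂ[X]) ^ a + 1) 1 k
        rw [add_sub_cancel_right, one_pow] at hdvd
        obtain ⟨R, hR⟩ := hdvd
        have : P = V1 + R * V1 * (X : ℂ[X]) ^ a := by
          rw [hP, show ((X : ℂ[X]) ^ a + 1) ^ k = 1 + (X : ℂ[X]) ^ a * R by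
            linear_combination hR]
          ring
        rw [this, Polynomial.coeff_add, Polynomial.coeff_mul_X_pow',
          if_neg (not_le.2 hmlt), add_zero]
      have hc2 : Q.coeff (b i₀) = V.coeff (b i₀) := by
        have : Q = V + V * (X : ℂ[X]) ^ A := by rw [hQ]; ring
        rw [this, Polynomial.coeff_add, Polynomial.coeff_mul_X_pow',
          if_neg (not_le.2 (lt_of_lt_of_le hmlt haA)), add_zero]
      have hz1 : V1.coeff (b i₀) = 0 := by
        rw [hV1]
        exact coeffZ Finset.univ (fun j => a - b j) (b i₀) hmpos
          (fun j _ => by have := hj₀ j (Finset.mem_univ j); show b i₀ < a - b j; omega)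
      have hz2 : V.coeff (b i₀) =
          (-1) ^ (l - 1) * ((Finset.univ.filter fun j => b j = b i₀).card : ℂ) := by
        rw [hV]
        have := coeffC Finset.univ (fun j => b j) (b i₀) hmpos
          (fun j _ => hi₀ j (Finset.mem_univ j))
        simpa using this
      have hcne : V.coeff (b i₀) ≠ 0 := by
        rw [hz2]
        apply mul_ne_zero (pow_ne_zero _ (by norm_num))
        rw [Nat.cast_ne_zero]
        refine Finset.card_ne_zero_of_mem (a := i₀) ?_
        simp
      rw [hPQ, hc2] at hc1
      exact hcne (hc1.trans hz1)
    have hsplit : ∑ j, b j = b j₀ + ∑ j ∈ Finset.univ.erase j₀, b j :=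
      (Finset.add_sum_erase _ _ (Finset.mem_univ j₀)).symm
    have hbound : (l - 1) * b i₀ ≤ ∑ j ∈ Finset.univ.erase j₀, b j := by
      have := Finset.card_nsmul_le_sum (Finset.univ.erase j₀) b (b i₀)
        (fun j _ => hi₀ j (Finset.mem_univ j))
      rwa [Finset.card_erase_of_mem (Finset.mem_univ j₀), Finset.card_univ,
        Fintype.card_fin, smul_eq_mul] at this
    have hl2 : l ≤ 2 := by
      have h1 : a = b j₀ + ∑ j ∈ Finset.univ.erase j₀, b j := hsum'.trans hsplit
      have h2 : (l - 1) * b i₀ ≤ b i₀ := by omega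
      have h3 : (l - 1) ≤ 1 := by
        by_contra hcon
        push_neg at hcon
        have : 2 * b i₀ ≤ (l - 1) * b i₀ := Nat.mul_le_mul_right _ (by omega)
        omega
      omega
    obtain ⟨t, ht⟩ := hl
    omega
end

section
/- Let a, b be positive integers. The 2 × 3 matrix with rows (a, b, −(a+b)) and (−a, −b, a+b) and signs ε_1 = ε_2 = 1 is T_{x,y}-rigid: for all complex x, y and all z in the domain, [(xz^a+y)(xz^b+y)(xz^{−(a+b)}+y)] / [(z^a−1)(z^b−1)(z^{−(a+b)}−1)] + [(xz^{−a}+y)(xz^{−b}+y)(xz^{a+b}+y)] / [(z^{−a}−1)(z^{−b}−1)(z^{a+b}−1)] = x²(−y) + x(−y)², which is independent of z. -/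
/-- The 'S₃' case: the 2 × 3 matrix with rows (a, b, -(a+b)) and (-a, -b, a+b)
and signs ε₁ = ε₂ = 1 is T_{x,y}-rigid with constant value x²(-y) + x(-y)². -/
theorem stmt_18 (a b : ℕ) (ha : 0 < a) (hb : 0 < b)
    (x y z : ℂ) (hz : z ≠ 0)
    (hza : z ^ (a : ℤ) ≠ 1) (hzb : z ^ (b : ℤ) ≠ 1) (hzab : z ^ ((a : ℤ) + b) ≠ 1) :
    (x * z ^ (a : ℤ) + y) * (x * z ^ (b : ℤ) + y) * (x * z ^ (-((a : ℤ) + b)) + y)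
        / ((z ^ (a : ℤ) - 1) * (z ^ (b : ℤ) - 1) * (z ^ (-((a : ℤ) + b)) - 1))
      + (x * z ^ (-(a : ℤ)) + y) * (x * z ^ (-(b : ℤ)) + y) * (x * z ^ ((a : ℤ) + b) + y)
        / ((z ^ (-(a : ℤ)) - 1) * (z ^ (-(b : ℤ)) - 1) * (z ^ ((a : ℤ) + b) - 1))
      = x ^ 2 * (-y) + x * (-y) ^ 2 := by
  have hA0 : z ^ (a : ℤ) ≠ 0 := zpow_ne_zero _ hz
  have hB0 : z ^ (b : ℤ) ≠ 0 := zpow_ne_zero _ hz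
  have hAB : z ^ ((a : ℤ) + b) = z ^ (a : ℤ) * z ^ (b : ℤ) := zpow_add₀ hz _ _
  have hA1 : z ^ (a : ℤ) - 1 ≠ 0 := sub_ne_zero.mpr hza
  have hB1 : z ^ (b : ℤ) - 1 ≠ 0 := sub_ne_zero.mpr hzb
  have hAB1 : z ^ (a : ℤ) * z ^ (b : ℤ) - 1 ≠ 0 := by
    rw [← hAB]; exact sub_ne_zero.mpr hzab
  rw [zpow_neg, zpow_neg, zpow_neg, hAB]
  set A := z ^ (a : ℤ) with hAdef
  set B := z ^ (b : ℤ) with hBdef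
  clear_value A B
  have h1 : (A * B)⁻¹ - 1 ≠ 0 := by
    rw [sub_ne_zero]
    intro h
    apply hAB1
    rw [← inv_inv (A*B), h, inv_one, sub_self]
  have h2 : A⁻¹ - 1 ≠ 0 := by
    rw [sub_ne_zero]; intro h; apply hA1; rw [← inv_inv A, h, inv_one, sub_self]
  have h3 : B⁻¹ - 1 ≠ 0 := by
    rw [sub_ne_zero]; intro h; apply hB1; rw [← inv_inv B, h, inv_one, sub_self]
  rw [div_add_div _ _ (mul_ne_zero (mul_ne_zero hA1 hB1) h1)
      (mul_ne_zero (mul_ne_zero h2 h3) hAB1),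
    div_eq_iff (mul_ne_zero (mul_ne_zero (mul_ne_zero hA1 hB1) h1)
      (mul_ne_zero (mul_ne_zero h2 h3) hAB1))]
  field_simp
  ring
end
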